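/- Subject reduction for λ•→: if Γ ⊢ e : t is derivable in λ•→ and e ⟶ e', then Γ ⊢ e' : t is derivable. -/

import Mathlib

namespace LambdaBullet

/-- Head constructors for pseudo-types. -/
inductive TyHead : Type
  | var (n : ℕ)
  | nat
  | prod
  | arrow
  | bullet

/-- Arity of each pseudo-type constructor. -/
def tyArity : TyHead → Type
  | .var _ => Empty
  | .nat => Empty
  | .prod => Bool
  | .arrow => Bool
  | .bullet => Unit

/-- The polynomial functor whose M-type is the type of pseudo-types. -/
def TyP : PFunctor := ⟨TyHead, tyArity⟩

/-- Pseudo-types: possibly infinite coinductively generated trees. -/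
abbrev PseudoType := TyP.M

/-- Type variable. -/
def tvar (n : ℕ) : PseudoType := PFunctor.M.mk ⟨TyHead.var n, Empty.elim⟩
/-- The type `Nat`. -/
def tnat : PseudoType := PFunctor.M.mk ⟨TyHead.nat, Empty.elim⟩
/-- Product type. -/
def tprod (t s : PseudoType) : PseudoType :=
  PFunctor.M.mk ⟨TyHead.prod, fun b => bif b then s else t⟩
/-- Arrow type. -/
def tarrow (t s : PseudoType) : PseudoType :=
  PFunctor.M.mk ⟨TyHead.arrow, fun b => bif b then s else t⟩
/-- Delay type `•t`. -/
def tbullet (t : PseudoType) : PseudoType :=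
  PFunctor.M.mk ⟨TyHead.bullet, fun _ => t⟩
/-- Iterated delay `•ⁿ t`. -/
def tbulletN (n : ℕ) (t : PseudoType) : PseudoType := tbullet^[n] t

/-- `Child t s` holds iff `s` is an immediate subtree of `t`. -/
def Child (t s : PseudoType) : Prop := ∃ b : TyP.B t.dest.1, t.dest.2 b = s

/-- `Subtree t s` holds iff `s` is a subtree of `t`. -/
def Subtree (t s : PseudoType) : Prop := Relation.ReflTransGen Child t s

/-- A pseudo-type is regular if it has finitely many distinct subtrees. -/
def Regular (t : PseudoType) : Prop := {s | Subtree t s}.Finite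

/-- The root of the tree is a `•`. -/
def headIsBullet (t : PseudoType) : Prop := t.dest.1 = TyHead.bullet

/-- A pseudo-type is guarded if every infinite path in its tree has
infinitely many `•`'s. -/
def Guarded (t : PseudoType) : Prop :=
  ∀ f : ℕ → PseudoType, f 0 = t → (∀ n, Child (f n) (f (n + 1))) →
    ∀ N, ∃ n, N ≤ n ∧ headIsBullet (f n)

/-- A type is a regular and guarded pseudo-type. -/
def IsType (t : PseudoType) : Prop := Regular t ∧ Guarded t

/-- `•^∞`: the unique pseudo-type satisfying `•^∞ = • •^∞`. -/
def binf : PseudoType := PFunctor.M.corec (fun _ : Unit => ⟨TyHead.bullet, fun _ => ()⟩) ()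

/-- Constants. -/
inductive Const : Type
  | pair
  | cfst
  | csnd
  | zero
  | succ

/-- Expressions (with de Bruijn indices for variables). -/
inductive Expr : Type
  | var (x : ℕ)
  | const (k : Const)
  | lam (e : Expr)
  | app (e₁ e₂ : Expr)

def liftRen (f : ℕ → ℕ) : ℕ → ℕ
  | 0 => 0
  | n + 1 => f n + 1

def rename (f : ℕ → ℕ) : Expr → Expr
  | .var n => .var (f n)
  | .const k => .const k
  | .lam e => .lam (rename (liftRen f) e)
  | .app a b => .app (rename f a) (rename f b)

def liftSub (ρ : ℕ → Expr) : ℕ → Expr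
  | 0 => .var 0
  | n + 1 => rename Nat.succ (ρ n)

/-- Simultaneous (capture-avoiding) substitution. -/
def substE (ρ : ℕ → Expr) : Expr → Expr
  | .var n => ρ n
  | .const k => .const k
  | .lam e => .lam (substE (liftSub ρ) e)
  | .app a b => .app (substE ρ a) (substE ρ b)

/-- `subst0 e f` is `e[f/x]` for the topmost variable `x`. -/
def subst0 (e f : Expr) : Expr :=
  substE (fun n => match n with | 0 => f | n + 1 => .var n) e

/-- The pair `⟨e₁, e₂⟩`. -/
def mkPair (e₁ e₂ : Expr) : Expr := .app (.app (.const .pair) e₁) e₂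

/-- Evaluation contexts E ::= [] | E e | fst E | snd E | succ E. -/
inductive ECtx : Type
  | hole
  | app (E : ECtx) (e : Expr)
  | fst (E : ECtx)
  | snd (E : ECtx)
  | succ (E : ECtx)

/-- Plugging an expression into an evaluation context. -/
def ECtx.plug : ECtx → Expr → Expr
  | .hole, e => e
  | .app E f, e => .app (E.plug e) f
  | .fst E, e => .app (.const .cfst) (E.plug e)
  | .snd E, e => .app (.const .csnd) (E.plug e)
  | .succ E, e => .app (.const .succ) (E.plug e)

/-- Head reduction rules. -/
inductive HeadRed : Expr → Expr → Prop
  | beta (e f) : HeadRed (.app (.lam e) f) (subst0 e f)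
  | fst (e₁ e₂) : HeadRed (.app (.const .cfst) (mkPair e₁ e₂)) e₁
  | snd (e₁ e₂) : HeadRed (.app (.const .csnd) (mkPair e₁ e₂)) e₂

/-- Weak head (call-by-name) reduction: head rules closed under evaluation contexts. -/
def Red (a b : Expr) : Prop :=
  ∃ (E : ECtx) (e f : Expr), HeadRed e f ∧ a = E.plug e ∧ b = E.plug f

/-- Many-step reduction. -/
def RedStar : Expr → Expr → Prop := Relation.ReflTransGen Red

/-- (Weak head) normal forms. -/
def NormalForm (e : Expr) : Prop := ∀ f, ¬ Red e f

/-- Typing contexts: finite maps from (de Bruijn) variables to types. -/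
def Ctx : Type := ℕ → Option PseudoType

/-- Extending a typing context with a type for the topmost variable. -/
def Ctx.cons (t : PseudoType) (Γ : Ctx) : Ctx :=
  fun n => match n with | 0 => some t | n + 1 => Γ n

/-- The type assignment κ for constants. -/
inductive KappaTy : Const → PseudoType → Prop
  | pair {t s} : IsType t → IsType s →
      KappaTy .pair (tarrow t (tarrow s (tprod t s)))
  | fst {t s} : IsType t → IsType s →
      KappaTy .cfst (tarrow (tprod t s) t)
  | snd {t s} : IsType t → IsType s →
      KappaTy .csnd (tarrow (tprod t s) s)
  | zero : KappaTy .zero tnat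
  | succ : KappaTy .succ (tarrow tnat tnat)

/-- The type assignment system λ•→. -/
inductive Types : Ctx → Expr → PseudoType → Prop
  | ax {Γ x t} : Γ x = some t → IsType t → Types Γ (.var x) t
  | const {Γ k t} : KappaTy k t → Types Γ (.const k) t
  | bulletI {Γ e t} : Types Γ e t → Types Γ e (tbullet t)
  | arrowI {Γ e n t s} :
      Types (Ctx.cons (tbulletN n t) Γ) e (tbulletN n s) →
      Types Γ (.lam e) (tbulletN n (tarrow t s))
  | arrowE {Γ e₁ e₂ n t s} :
      Types Γ e₁ (tbulletN n (tarrow t s)) → Types Γ e₂ (tbulletN n t) →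
      Types Γ (.app e₁ e₂) (tbulletN n s)


/-! ### Auxiliary lemmas -/

lemma tbulletN_succ (n : ℕ) (t : PseudoType) :
    tbulletN (n+1) t = tbullet (tbulletN n t) :=
  Function.iterate_succ_apply' _ _ _

lemma dest_tbullet (t : PseudoType) :
    (tbullet t).dest = ⟨TyHead.bullet, fun _ => t⟩ := PFunctor.M.dest_mk _

lemma dest_tarrow (t s : PseudoType) :
    (tarrow t s).dest = ⟨TyHead.arrow, fun b => bif b then s else t⟩ := PFunctor.M.dest_mk _

lemma dest_tprod (t s : PseudoType) :
    (tprod t s).dest = ⟨TyHead.prod, fun b => bif b then s else t⟩ := PFunctor.M.dest_mk _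

lemma dest_tnat : (tnat : PseudoType).dest = ⟨TyHead.nat, Empty.elim⟩ := PFunctor.M.dest_mk _

lemma head_tbullet (t : PseudoType) : (tbullet t).dest.1 = TyHead.bullet := by
  rw [dest_tbullet]

lemma head_tarrow (t s : PseudoType) : (tarrow t s).dest.1 = TyHead.arrow := by
  rw [dest_tarrow]

lemma head_tprod (t s : PseudoType) : (tprod t s).dest.1 = TyHead.prod := by
  rw [dest_tprod]

lemma tbullet_inj {t s : PseudoType} (h : tbullet t = tbullet s) : t = s := by
  have h2 := congrArg PFunctor.M.dest h
  rw [dest_tbullet, dest_tbullet] at h2; replace h2 := Sigma.mk.inj h2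
  exact congrFun (eq_of_heq h2.2) ()

lemma tarrow_inj {t s t' s' : PseudoType} (h : tarrow t s = tarrow t' s') :
    t = t' ∧ s = s' := by
  have h2 := congrArg PFunctor.M.dest h
  rw [dest_tarrow, dest_tarrow] at h2; replace h2 := Sigma.mk.inj h2
  have h3 := eq_of_heq h2.2
  exact ⟨congrFun h3 false, congrFun h3 true⟩

lemma tprod_inj {t s t' s' : PseudoType} (h : tprod t s = tprod t' s') :
    t = t' ∧ s = s' := by
  have h2 := congrArg PFunctor.M.dest h
  rw [dest_tprod, dest_tprod] at h2; replace h2 := Sigma.mk.inj h2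
  have h3 := eq_of_heq h2.2
  exact ⟨congrFun h3 false, congrFun h3 true⟩

lemma bulletN_cancel : ∀ (n m : ℕ) (v w : PseudoType),
    v.dest.1 ≠ TyHead.bullet → w.dest.1 ≠ TyHead.bullet →
    tbulletN n v = tbulletN m w → n = m ∧ v = w := by
  intro n
  induction n with
  | zero =>
    intro m v w hv hw h
    cases m with
    | zero => exact ⟨rfl, h⟩
    | succ m =>
      rw [tbulletN_succ] at h
      have hv2 : v = tbullet (tbulletN m w) := h
      rw [hv2, head_tbullet] at hv
      exact absurd rfl hv
  | succ n ih =>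
    intro m v w hv hw h
    cases m with
    | zero =>
      rw [tbulletN_succ] at h
      have hw2 : w = tbullet (tbulletN n v) := h.symm
      rw [hw2, head_tbullet] at hw
      exact absurd rfl hw
    | succ m =>
      rw [tbulletN_succ, tbulletN_succ] at h
      obtain ⟨h1, h2⟩ := ih m v w hv hw (tbullet_inj h)
      exact ⟨by rw [h1], h2⟩

lemma arrow_bulletN_cancel {n m : ℕ} {t s t' s' : PseudoType}
    (h : tbulletN n (tarrow t s) = tbulletN m (tarrow t' s')) :
    n = m ∧ t = t' ∧ s = s' := by
  obtain ⟨h1, h2⟩ := bulletN_cancel n m _ _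
    (by simp [head_tarrow]; exact fun h => by cases h) (by simp [head_tarrow]; exact fun h => by cases h) h
  exact ⟨h1, tarrow_inj h2⟩

lemma prod_bulletN_cancel {n m : ℕ} {t s t' s' : PseudoType}
    (h : tbulletN n (tprod t s) = tbulletN m (tprod t' s')) :
    n = m ∧ t = t' ∧ s = s' := by
  obtain ⟨h1, h2⟩ := bulletN_cancel n m _ _
    (by simp [head_tprod]; exact fun h => by cases h) (by simp [head_tprod]; exact fun h => by cases h) h
  exact ⟨h1, tprod_inj h2⟩

lemma child_tbullet {t s : PseudoType} (h : Child (tbullet t) s) : s = t := by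
  obtain ⟨b, hb⟩ := h
  revert b hb
  show ∀ b : TyP.B (tbullet t).dest.1, (tbullet t).dest.2 b = s → s = t
  rw [dest_tbullet]
  exact fun _ hb => hb.symm

lemma IsType.bullet {t : PseudoType} (h : IsType t) : IsType (tbullet t) := by
  constructor
  · have hsub : {s | Subtree (tbullet t) s} ⊆ insert (tbullet t) {s | Subtree t s} := by
      intro s hs
      rcases Relation.ReflTransGen.cases_head hs with h' | ⟨c, hc, h'⟩
      · exact Or.inl h'.symm
      · rw [child_tbullet hc] at h'
        exact Or.inr h'
    exact (h.1.insert _).subset hsub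
  · intro f h0 hc N
    have h1 : f 1 = t := child_tbullet (h0 ▸ hc 0)
    obtain ⟨n, hn, hb⟩ := h.2 (fun n => f (n+1)) h1 (fun n => hc (n+1)) N
    exact ⟨n+1, le_trans hn (Nat.le_succ n), hb⟩

/-- One-step delaying of some context entries. -/
def Delay1 (Γ Γ' : Ctx) : Prop :=
  ∀ x, Γ' x = Γ x ∨ ∃ u, Γ x = some u ∧ Γ' x = some (tbullet u)

lemma Delay1.cons {Γ Γ' : Ctx} (h : Delay1 Γ Γ') (a : PseudoType) :
    Delay1 (Ctx.cons a Γ) (Ctx.cons (tbullet a) Γ') := by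
  intro x
  cases x with
  | zero => exact Or.inr ⟨a, rfl, rfl⟩
  | succ x => exact h x

lemma delay {Γ : Ctx} {e : Expr} {t : PseudoType} (h : Types Γ e t) :
    ∀ Γ', Delay1 Γ Γ' → Types Γ' e (tbullet t) := by
  induction h with
  | @ax Γ x t hx ht =>
    intro Γ' hd
    rcases hd x with h' | ⟨u, hu, hu'⟩
    · exact .bulletI (.ax (h'.trans hx) ht)
    · rw [hx] at hu
      injection hu with hu
      subst hu
      exact .ax hu' ht.bullet
  | const hk => exact fun Γ' _ => .bulletI (.const hk)
  | bulletI _ ih => exact fun Γ' hd => .bulletI (ih Γ' hd)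
  | @arrowI Γ e n t s _ ih =>
    intro Γ' hd
    have h1 := ih _ (hd.cons (tbulletN n t))
    rw [← tbulletN_succ, ← tbulletN_succ] at h1
    have h2 := Types.arrowI h1
    rw [tbulletN_succ] at h2
    exact h2
  | @arrowE Γ e₁ e₂ n t s _ _ ih1 ih2 =>
    intro Γ' hd
    have h1 := ih1 Γ' hd
    have h2 := ih2 Γ' hd
    rw [← tbulletN_succ] at h1 h2
    have h3 := Types.arrowE h1 h2
    rw [tbulletN_succ] at h3
    exact h3

lemma gen_app {Γ : Ctx} {e : Expr} {u : PseudoType} (h : Types Γ e u) :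
    ∀ a b, e = .app a b →
      ∃ n t s, u = tbulletN n s ∧ Types Γ a (tbulletN n (tarrow t s)) ∧
        Types Γ b (tbulletN n t) := by
  induction h with
  | ax _ _ => intro a b h; cases h
  | const _ => intro a b h; cases h
  | bulletI _ ih =>
    intro a b he
    obtain ⟨n, t, s, rfl, h1, h2⟩ := ih a b he
    refine ⟨n+1, t, s, (tbulletN_succ n s).symm, ?_, ?_⟩ <;>
      rw [tbulletN_succ] <;> exact .bulletI (by assumption)
  | @arrowE Γ e₁ e₂ n t s h1 h2 _ _ =>
    intro a b he
    injection he with ha hb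
    subst ha; subst hb
    exact ⟨n, t, s, rfl, h1, h2⟩
  | arrowI _ _ => intro a b h; cases h

lemma gen_lam {Γ : Ctx} {e : Expr} {u : PseudoType} (h : Types Γ e u) :
    ∀ e₀, e = .lam e₀ →
      ∃ n t s, u = tbulletN n (tarrow t s) ∧
        Types (Ctx.cons (tbulletN n t) Γ) e₀ (tbulletN n s) := by
  induction h with
  | ax _ _ => intro e₀ h; cases h
  | const _ => intro e₀ h; cases h
  | @bulletI Γ e t' _ ih =>
    intro e₀ he
    obtain ⟨n, t, s, rfl, h1⟩ := ih e₀ he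
    refine ⟨n+1, t, s, (tbulletN_succ n _).symm, ?_⟩
    have h2 := delay h1 (Ctx.cons (tbullet (tbulletN n t)) Γ)
      (Delay1.cons (fun x => Or.inl rfl) _)
    rw [← tbulletN_succ, ← tbulletN_succ] at h2
    exact h2
  | @arrowI Γ e n t s h1 _ =>
    intro e₀ he
    injection he with ha
    subst ha
    exact ⟨n, t, s, rfl, h1⟩
  | arrowE _ _ _ _ => intro e₀ h; cases h

lemma gen_const {Γ : Ctx} {e : Expr} {u : PseudoType} (h : Types Γ e u) :
    ∀ k, e = .const k → ∃ m v, u = tbulletN m v ∧ KappaTy k v := by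
  induction h with
  | ax _ _ => intro k h; cases h
  | @const Γ k t hk =>
    intro k' hk'
    injection hk' with hkk
    subst hkk
    exact ⟨0, t, rfl, hk⟩
  | bulletI _ ih =>
    intro k hk
    obtain ⟨m, v, rfl, h1⟩ := ih k hk
    exact ⟨m+1, v, (tbulletN_succ m v).symm, h1⟩
  | arrowI _ _ => intro k h; cases h
  | arrowE _ _ _ _ => intro k h; cases h

lemma rename_ty {Γ : Ctx} {e : Expr} {t : PseudoType} (h : Types Γ e t) :
    ∀ (f : ℕ → ℕ) (Γ' : Ctx), (∀ x, Γ' (f x) = Γ x) → Types Γ' (rename f e) t := by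
  induction h with
  | @ax Γ x t hx ht =>
    intro f Γ' hf
    exact .ax ((hf x).trans hx) ht
  | const hk => exact fun f Γ' _ => .const hk
  | bulletI _ ih => exact fun f Γ' hf => .bulletI (ih f Γ' hf)
  | @arrowI Γ e n t s _ ih =>
    intro f Γ' hf
    refine .arrowI (ih (liftRen f) (Ctx.cons (tbulletN n t) Γ') ?_)
    intro x
    cases x with
    | zero => rfl
    | succ x => exact hf x
  | arrowE _ _ ih1 ih2 =>
    exact fun f Γ' hf => .arrowE (ih1 f Γ' hf) (ih2 f Γ' hf)

lemma subst_ty {Γ : Ctx} {e : Expr} {t : PseudoType} (h : Types Γ e t) :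
    ∀ (ρ : ℕ → Expr) (Γ' : Ctx),
      (∀ x u, Γ x = some u → IsType u → Types Γ' (ρ x) u) →
      Types Γ' (substE ρ e) t := by
  induction h with
  | @ax Γ x t hx ht =>
    intro ρ Γ' hρ
    exact hρ x t hx ht
  | const hk => exact fun ρ Γ' _ => .const hk
  | bulletI _ ih => exact fun ρ Γ' hρ => .bulletI (ih ρ Γ' hρ)
  | @arrowI Γ e n t s _ ih =>
    intro ρ Γ' hρ
    refine .arrowI (ih (liftSub ρ) (Ctx.cons (tbulletN n t) Γ') ?_)
    intro x u hx hu
    cases x with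
    | zero =>
      injection hx with hx
      subst hx
      exact .ax rfl hu
    | succ x =>
      exact rename_ty (hρ x u hx hu) Nat.succ (Ctx.cons (tbulletN n t) Γ')
        (fun _ => rfl)
  | arrowE _ _ ih1 ih2 =>
    exact fun ρ Γ' hρ => .arrowE (ih1 ρ Γ' hρ) (ih2 ρ Γ' hρ)

lemma kappa_head {k : Const} {v : PseudoType} (h : KappaTy k v) :
    v.dest.1 ≠ TyHead.bullet := by
  cases h <;> first
    | (rw [head_tarrow]; exact fun h => by cases h)
    | (rw [dest_tnat]; exact fun h => by cases h)

lemma head_pres {Γ : Ctx} {a b : Expr} {t : PseudoType}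
    (hr : HeadRed a b) (h : Types Γ a t) : Types Γ b t := by
  cases hr with
  | beta e f =>
    obtain ⟨n, t', s, rfl, h1, h2⟩ := gen_app h _ _ rfl
    obtain ⟨m, t₀, s₀, heq, h3⟩ := gen_lam h1 _ rfl
    obtain ⟨rfl, rfl, rfl⟩ := arrow_bulletN_cancel heq
    refine subst_ty h3 _ Γ ?_
    intro x u hx hu
    cases x with
    | zero =>
      injection hx with hx
      subst hx
      exact h2
    | succ x => exact .ax hx hu
  | fst e₁ e₂ =>
    obtain ⟨n, t', s, rfl, h1, h2⟩ := gen_app h _ _ rfl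
    obtain ⟨m, v, heq, hk⟩ := gen_const h1 _ rfl
    cases hk with
    | @fst a b ha hb =>
      obtain ⟨rfl, ht', hs⟩ := arrow_bulletN_cancel heq
      subst ht'; subst hs
      -- h2 : Types Γ (mkPair e₁ e₂) (tbulletN n (tprod a b))
      obtain ⟨n₂, t₂, s₂, heq2, h3, h4⟩ := gen_app h2 _ _ rfl
      obtain ⟨n₁, t₁, s₁, heq1, h5, h6⟩ := gen_app h3 _ _ rfl
      obtain ⟨m₁, v₁, heq0, hk₁⟩ := gen_const h5 _ rfl
      cases hk₁ with
      | @pair c d hc hd =>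
        obtain ⟨rfl, rfl, rfl⟩ := arrow_bulletN_cancel heq0
        obtain ⟨rfl, rfl, rfl⟩ := arrow_bulletN_cancel heq1
        obtain ⟨rfl, rfl, rfl⟩ := prod_bulletN_cancel heq2
        exact h6
  | snd e₁ e₂ =>
    obtain ⟨n, t', s, rfl, h1, h2⟩ := gen_app h _ _ rfl
    obtain ⟨m, v, heq, hk⟩ := gen_const h1 _ rfl
    cases hk with
    | @snd a b ha hb =>
      obtain ⟨rfl, ht', hs⟩ := arrow_bulletN_cancel heq
      subst ht'; subst hs
      obtain ⟨n₂, t₂, s₂, heq2, h3, h4⟩ := gen_app h2 _ _ rfl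
      obtain ⟨n₁, t₁, s₁, heq1, h5, h6⟩ := gen_app h3 _ _ rfl
      obtain ⟨m₁, v₁, heq0, hk₁⟩ := gen_const h5 _ rfl
      cases hk₁ with
      | @pair c d hc hd =>
        obtain ⟨rfl, rfl, rfl⟩ := arrow_bulletN_cancel heq0
        obtain ⟨rfl, rfl, rfl⟩ := arrow_bulletN_cancel heq1
        obtain ⟨rfl, rfl, rfl⟩ := prod_bulletN_cancel heq2
        exact h4

lemma plug_pres {Γ : Ctx} {a b : Expr}
    (hab : ∀ u, Types Γ a u → Types Γ b u) :
    ∀ (E : ECtx) (t : PseudoType), Types Γ (E.plug a) t → Types Γ (E.plug b) t := by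
  intro E
  induction E with
  | hole => exact hab
  | app E f ih =>
    intro t h
    obtain ⟨n, t', s, rfl, h1, h2⟩ := gen_app h _ _ rfl
    exact .arrowE (ih _ h1) h2
  | fst E ih =>
    intro t h
    obtain ⟨n, t', s, rfl, h1, h2⟩ := gen_app h _ _ rfl
    exact .arrowE h1 (ih _ h2)
  | snd E ih =>
    intro t h
    obtain ⟨n, t', s, rfl, h1, h2⟩ := gen_app h _ _ rfl
    exact .arrowE h1 (ih _ h2)
  | succ E ih =>
    intro t h
    obtain ⟨n, t', s, rfl, h1, h2⟩ := gen_app h _ _ rfl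
    exact .arrowE h1 (ih _ h2)

/-- Subject reduction: if `Γ ⊢ e : t` and `e ⟶ e'`
then `Γ ⊢ e' : t`. -/
theorem subject_reduction (Γ : Ctx) (e e' : Expr) (t : PseudoType)
    (h : Types Γ e t) (hr : Red e e') : Types Γ e' t := by
  obtain ⟨E, a, b, hhr, rfl, rfl⟩ := hr
  exact plug_pres (fun u hu => head_pres hhr hu) E t h

end LambdaBullet
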